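/- In the homogeneous networked system, if there exists at least one node i with δ_i = 0 (a node without external control input) and the pair (Φ, Ψ) is controllable, then the pair (A, H·C) is controllable. -/

import Mathlib

open Matrix Finset Kronecker

/-- PBH test: the pair `(M, B)` is controllable iff `[s·I − M, B]` has full row rank
for every `s ∈ ℂ`. -/
def IsControllable {q r : Type*} [Fintype q] [Fintype r] [DecidableEq q]
    (M : Matrix q q ℂ) (B : Matrix q r ℂ) : Prop :=
  ∀ s : ℂ, (Matrix.fromCols (s • (1 : Matrix q q ℂ) - M) B).rank = Fintype.card q

lemma full_rank_iff_aux {q r : Type*} [Fintype q] [Fintype r]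
    (M : Matrix q r ℂ) :
    M.rank = Fintype.card q ↔ ∀ v : q → ℂ, v ᵥ* M = 0 → v = 0 := by
  have h1 : M.rank = Fintype.card q ↔ LinearIndependent ℂ (fun i => M i) := by
    rw [M.rank_eq_finrank_span_row, eq_comm, ← Set.finrank,
      ← linearIndependent_iff_card_eq_finrank_span]
    exact Iff.rfl
  rw [h1, Fintype.linearIndependent_iff]
  constructor
  · intro h v hv
    funext i
    refine h v ?_ i
    funext j
    simpa [Matrix.vecMul, dotProduct, Finset.sum_apply] using congr_fun hv j
  · intro h g hg
    have hg0 : g = 0 := by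
      refine h g ?_
      funext j
      simpa [Matrix.vecMul, dotProduct, Finset.sum_apply] using congr_fun hg j
    exact fun i => congr_fun hg0 i

lemma kron_vecMul_aux {a b a' b' : Type*} [Fintype a] [Fintype b]
    (u : a → ℂ) (v : b → ℂ) (M : Matrix a a' ℂ) (Nm : Matrix b b' ℂ) :
    (fun q : a × b => u q.1 * v q.2) ᵥ* (M ⊗ₖ Nm)
      = fun q : a' × b' => (u ᵥ* M) q.1 * (v ᵥ* Nm) q.2 := by
  funext q
  obtain ⟨i, j⟩ := q
  simp only [Matrix.vecMul, dotProduct, Matrix.kroneckerMap_apply]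
  rw [← Finset.univ_product_univ, Finset.sum_product, Finset.sum_mul_sum]
  exact Finset.sum_congr rfl fun k _ => Finset.sum_congr rfl fun l _ => by ring

lemma vecMul_smul_one_aux {q : Type*} [Fintype q] [DecidableEq q] (s : ℂ) (v : q → ℂ) :
    v ᵥ* (s • (1 : Matrix q q ℂ)) = s • v := by
  funext j
  simp [Matrix.vecMul, dotProduct, Matrix.one_apply, mul_ite, mul_comm]

/-- Lemma 1: in the homogeneous networked system with
`Φ = I_N ⊗ A + W ⊗ (H·C)` and `Ψ = Δ ⊗ B`, if some node has no external control input
and `(Φ, Ψ)` is controllable, then `(A, H·C)` is controllable. -/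
theorem stmt8 (N n m p : ℕ) (hN : 1 ≤ N)
    (A : Matrix (Fin n) (Fin n) ℝ)
    (B : Matrix (Fin n) (Fin p) ℝ)
    (C : Matrix (Fin m) (Fin n) ℝ)
    (H : Matrix (Fin n) (Fin m) ℝ)
    (W : Matrix (Fin N) (Fin N) ℝ)
    (δ : Fin N → ℝ) (hδ : ∀ i, δ i = 0 ∨ δ i = 1)
    -- some node has no external control input
    (hfree : ∃ i : Fin N, δ i = 0)
    -- Φ = I_N ⊗ A + W ⊗ (H·C) and Ψ = Δ ⊗ B are controllable
    (hctrb : IsControllable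
      ((1 : Matrix (Fin N) (Fin N) ℂ) ⊗ₖ (A.map Complex.ofReal)
        + (W.map Complex.ofReal) ⊗ₖ ((H.map Complex.ofReal) * (C.map Complex.ofReal)))
      (((Matrix.diagonal δ).map Complex.ofReal) ⊗ₖ (B.map Complex.ofReal))) :
    IsControllable (A.map Complex.ofReal)
      ((H.map Complex.ofReal) * (C.map Complex.ofReal)) := by
  
  intro s
  set A' := A.map Complex.ofReal with hA'
  set W' := W.map Complex.ofReal with hW'
  set B' := B.map Complex.ofReal with hB'
  set HC := (H.map Complex.ofReal) * (C.map Complex.ofReal) with hHCdef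
  by_contra hrank
  rw [full_rank_iff_aux] at hrank
  push_neg at hrank
  obtain ⟨v, hv0, hvne⟩ := hrank
  rw [Matrix.vecMul_fromCols] at hv0
  have hvA : v ᵥ* (s • (1 : Matrix (Fin n) (Fin n) ℂ) - A') = 0 :=
    funext fun j => congr_fun hv0 (Sum.inl j)
  have hvHC : v ᵥ* HC = 0 := funext fun j => congr_fun hv0 (Sum.inr j)
  have hsv : v ᵥ* A' = s • v := by
    rw [Matrix.vecMul_sub, vecMul_smul_one_aux, sub_eq_zero] at hvA
    exact hvA.symm
  obtain ⟨i, hi⟩ := hfree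
  set e : Fin N → ℂ := Pi.single i 1 with he
  set x : Fin N × Fin n → ℂ := fun q => e q.1 * v q.2 with hxdef
  have hx := (full_rank_iff_aux _).mp (hctrb s) x
  rw [Matrix.vecMul_fromCols] at hx
  have hx1 : x ᵥ* (s • (1 : Matrix (Fin N × Fin n) (Fin N × Fin n) ℂ)
      - ((1 : Matrix (Fin N) (Fin N) ℂ) ⊗ₖ A' + W' ⊗ₖ HC)) = 0 := by
    rw [Matrix.vecMul_sub, Matrix.vecMul_add, vecMul_smul_one_aux,
      hxdef, kron_vecMul_aux, kron_vecMul_aux, Matrix.vecMul_one, hvHC, hsv]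
    funext q
    simp [smul_eq_mul]
    ring
  have hx2 : x ᵥ* (((Matrix.diagonal δ).map Complex.ofReal) ⊗ₖ B') = 0 := by
    rw [hxdef, kron_vecMul_aux]
    funext q
    have : (e ᵥ* ((Matrix.diagonal δ).map Complex.ofReal)) q.1 = 0 := by
      rw [Matrix.diagonal_map (by simp), Matrix.vecMul_diagonal]
      rcases eq_or_ne q.1 i with h | h
      · simp [he, h, hi]
      · simp [he, Pi.single_eq_of_ne h]
    rw [this, zero_mul]
    simp
  have hxeq : x = 0 := hx (by rw [hx1, hx2]; funext q; cases q <;> rfl)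
  obtain ⟨k, hk⟩ := Function.ne_iff.mp hvne
  have : x (i, k) = 0 := congr_fun hxeq (i, k)
  simp [hxdef, he] at this
  exact hk this
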